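/- arXiv:1809.00882 — 4 statements merged into one kernel-verified Lean document; each statement's English description precedes it below -/
import Mathlib

section
/- Let (μ_n) be a sequence of probability measures on ℝ, all with support contained in a fixed compact interval [a,b]. If for every k ∈ ℕ the moments m_k(μ_n) converge as n → ∞ to some limits m_k, then μ_n converges weakly to a probability measure μ with support in [a,b] and with m_k(μ) = m_k for all k. -/
open MeasureTheory Filter

lemma mom_ae {a b : ℝ} (θ : Measure ℝ) (hsupp : θ (Set.Icc a b)ᶜ = 0) :
    ∀ᵐ x ∂θ, x ∈ Set.Icc a b := by
  rw [ae_iff]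
  exact hsupp

lemma mom_integrable {a b : ℝ} (θ : Measure ℝ) [IsFiniteMeasure θ]
    (hsupp : θ (Set.Icc a b)ᶜ = 0) {g : ℝ → ℝ} (hg : Measurable g) {C : ℝ}
    (hC : ∀ x ∈ Set.Icc a b, |g x| ≤ C) : Integrable g θ := by
  refine ⟨hg.aestronglyMeasurable, HasFiniteIntegral.of_bounded (C := C) ?_⟩
  filter_upwards [mom_ae θ hsupp] with x hx
  simpa using hC x hx

lemma mom_formula {a b : ℝ} (hab : a ≤ b) (θ : Measure ℝ) [IsProbabilityMeasure θ]
    (hsupp : θ (Set.Icc a b)ᶜ = 0) (k : ℕ) :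
    ∫ x, x ^ (k + 1) ∂θ
      = a ^ (k + 1)
        + ∫ t in Set.Ioc a b, (((k : ℝ) + 1) * t ^ k) * (θ (Set.Ioi t)).toReal := by
  classical
  set μ1 : Measure ℝ := volume.restrict (Set.Ioc a b) with hμ1
  haveI : IsFiniteMeasure μ1 := by
    constructor
    rw [Measure.restrict_apply_univ]
    exact measure_Ioc_lt_top
  set c : ℝ → ℝ := fun t => ((k : ℝ) + 1) * t ^ k with hc
  set Fun : ℝ → ℝ → ℝ := fun t x =>
    (Set.Ioc a b).indicator c t * (Set.Ioi t).indicator (fun _ => (1 : ℝ)) x with hFun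
  set C : ℝ := ((k : ℝ) + 1) * (max |a| |b|) ^ k with hC
  have hcbound : ∀ t ∈ Set.Ioc a b, |c t| ≤ C := by
    intro t ht
    rw [hc, hC, abs_mul]
    have h1 : |(k : ℝ) + 1| = (k : ℝ) + 1 := abs_of_nonneg (by positivity)
    rw [h1, abs_pow]
    apply mul_le_mul_of_nonneg_left _ (by positivity)
    apply pow_le_pow_left₀ (abs_nonneg t)
    rw [abs_le]
    constructor
    · have := ht.1
      have h2 : -(max |a| |b|) ≤ a := by
        have := neg_abs_le a
        have := le_max_left |a| |b|
        linarith
      linarith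
    · have := ht.2
      have h3 : b ≤ max |a| |b| := le_trans (le_abs_self b) (le_max_right _ _)
      linarith
  have hCnn : 0 ≤ C := by positivity
  have hFunBound : ∀ p : ℝ × ℝ, ‖Function.uncurry Fun p‖ ≤ C := by
    rintro ⟨t, x⟩
    simp only [Function.uncurry, hFun, norm_mul, Real.norm_eq_abs]
    have h1 : |(Set.Ioc a b).indicator c t| ≤ C := by
      by_cases ht : t ∈ Set.Ioc a b
      · rw [Set.indicator_of_mem ht]; exact hcbound t ht
      · rw [Set.indicator_of_notMem ht]; simpa using hCnn
    have h2 : |(Set.Ioi t).indicator (fun _ => (1:ℝ)) x| ≤ 1 := by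
      by_cases hx : x ∈ Set.Ioi t
      · rw [Set.indicator_of_mem hx]; simp
      · rw [Set.indicator_of_notMem hx]; simp
    calc |(Set.Ioc a b).indicator c t| * |(Set.Ioi t).indicator (fun _ => (1:ℝ)) x|
        ≤ C * 1 := by
          apply mul_le_mul h1 h2 (abs_nonneg _) hCnn
      _ = C := mul_one C
  have hFunMeas : Measurable (Function.uncurry Fun) := by
    have h1 : Measurable fun p : ℝ × ℝ => (Set.Ioc a b).indicator c p.1 :=
      (Measurable.indicator (by fun_prop) measurableSet_Ioc).comp measurable_fst
    have h2 : (fun p : ℝ × ℝ => (Set.Ioi p.1).indicator (fun _ => (1:ℝ)) p.2)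
        = {p : ℝ × ℝ | p.1 < p.2}.indicator (fun _ => (1:ℝ)) := by
      funext p
      by_cases h : p.1 < p.2 <;>
        simp [Set.indicator_apply, Set.mem_Ioi, Set.mem_setOf_eq, h]
    have h3 : Measurable fun p : ℝ × ℝ => (Set.Ioi p.1).indicator (fun _ => (1:ℝ)) p.2 := by
      rw [h2]
      exact measurable_const.indicator (measurableSet_lt measurable_fst measurable_snd)
    exact h1.mul h3
  have hInt : Integrable (Function.uncurry Fun) (μ1.prod θ) :=
    ⟨hFunMeas.aestronglyMeasurable,
      HasFiniteIntegral.of_bounded (C := C) (Eventually.of_forall hFunBound)⟩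
  have hswap : ∫ t, ∫ x, Fun t x ∂θ ∂μ1 = ∫ x, ∫ t, Fun t x ∂μ1 ∂θ :=
    integral_integral_swap hInt
  -- LHS computation
  have hLHS : ∫ t, ∫ x, Fun t x ∂θ ∂μ1
      = ∫ t in Set.Ioc a b, (((k : ℝ) + 1) * t ^ k) * (θ (Set.Ioi t)).toReal := by
    rw [hμ1]
    apply setIntegral_congr_fun measurableSet_Ioc
    intro t ht
    rw [hFun]
    simp only
    rw [Set.indicator_of_mem ht]
    rw [integral_const_mul]
    congr 1
    have : ∫ x, (Set.Ioi t).indicator (fun _ => (1:ℝ)) x ∂θ = (θ (Set.Ioi t)).toReal := by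
      rw [integral_indicator measurableSet_Ioi]
      simp [Measure.real_def]
    rw [this]
  -- RHS computation
  have hRHS : ∫ x, ∫ t, Fun t x ∂μ1 ∂θ = ∫ x, x ^ (k + 1) ∂θ - a ^ (k + 1) := by
    have hae' : ∀ᵐ x ∂θ, x ∈ Set.Icc a b := mom_ae θ hsupp
    have step : ∀ᵐ x ∂θ, ∫ t, Fun t x ∂μ1 = x ^ (k + 1) - a ^ (k + 1) := by
      filter_upwards [hae'] with x hx
      have hax : a ≤ x := hx.1
      have hxb : x ≤ b := hx.2
      have hFt : (fun t => Fun t x) = (Set.Ioo a x).indicator c := by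
        funext t
        rw [hFun]
        simp only
        by_cases h1 : t ∈ Set.Ioc a b <;> by_cases h2 : x ∈ Set.Ioi t
        · rw [Set.indicator_of_mem h1, Set.indicator_of_mem h2,
            Set.indicator_of_mem (by exact ⟨h1.1, Set.mem_Ioi.1 h2⟩), mul_one]
        · rw [Set.indicator_of_notMem h2, mul_zero,
            Set.indicator_of_notMem (fun hh => h2 (Set.mem_Ioi.2 hh.2))]
        · rw [Set.indicator_of_notMem h1, zero_mul,
            Set.indicator_of_notMem (fun hh => h1 ⟨hh.1, le_trans (le_of_lt hh.2) hxb⟩)]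
        · rw [Set.indicator_of_notMem h1, zero_mul,
            Set.indicator_of_notMem (fun hh => h1 ⟨hh.1, le_trans (le_of_lt hh.2) hxb⟩)]
      rw [hFt, hμ1]
      rw [integral_indicator measurableSet_Ioo]
      rw [Measure.restrict_restrict measurableSet_Ioo]
      have hIoo : Set.Ioo a x ∩ Set.Ioc a b = Set.Ioo a x := by
        apply Set.inter_eq_left.2
        intro t ht
        exact ⟨ht.1, le_trans (le_of_lt ht.2) hxb⟩
      rw [hIoo]
      have : ∫ t in Set.Ioo a x, c t = ∫ t in Set.Ioc a x, c t := by
        rw [← integral_Ioc_eq_integral_Ioo]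
      rw [this, ← intervalIntegral.integral_of_le hax]
      rw [hc]
      rw [intervalIntegral.integral_const_mul]
      rw [integral_pow]
      push_cast
      field_simp
    rw [integral_congr_ae step]
    have hint1 : Integrable (fun x : ℝ => x ^ (k + 1)) θ :=
      mom_integrable θ hsupp (by fun_prop) (C := (max |a| |b|) ^ (k+1)) (by
        intro x hx
        rw [abs_pow]
        gcongr
        rw [abs_le]
        constructor
        · have h2 : -(max |a| |b|) ≤ a := by
            have := neg_abs_le a
            have := le_max_left |a| |b|
            linarith
          linarith [hx.1]
        · have h3 : b ≤ max |a| |b| := le_trans (le_abs_self b) (le_max_right _ _)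
          linarith [hx.2])
    rw [integral_sub hint1 (integrable_const _)]
    simp
  rw [hLHS] at hswap
  rw [hRHS] at hswap
  linarith

open scoped ENNReal


lemma mom_abs_le {a b t : ℝ} (h1 : a ≤ t) (h2 : t ≤ b) : |t| ≤ max |a| |b| := by
  rw [abs_le]
  constructor
  · have := neg_abs_le a; have := le_max_left |a| |b|; linarith
  · have := le_abs_self b; have := le_max_right |a| |b|; linarith

/-- method of moments for measures with support in a fixed compact
interval: convergence of all moments implies weak convergence to a limit measure
with support in [a,b] and the limiting moments. -/
theorem weak_convergence_of_moments (a b : ℝ) (μ : ℕ → Measure ℝ)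
    (hprob : ∀ n, IsProbabilityMeasure (μ n))
    (hsupp : ∀ n, μ n (Set.Icc a b)ᶜ = 0)
    (m : ℕ → ℝ)
    (hmom : ∀ k : ℕ, Tendsto (fun n => ∫ x, x ^ k ∂(μ n)) atTop (nhds (m k))) :
    ∃ ν : Measure ℝ, IsProbabilityMeasure ν ∧ ν (Set.Icc a b)ᶜ = 0 ∧
      (∀ k : ℕ, ∫ x, x ^ k ∂ν = m k) ∧
      (∀ f : BoundedContinuousFunction ℝ ℝ,
        Tendsto (fun n => ∫ x, f x ∂(μ n)) atTop (nhds (∫ x, f x ∂ν))) := by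
  have hab : a ≤ b := by
    by_contra h
    have h1 : Set.Icc a b = ∅ := Set.Icc_eq_empty h
    have h2 := hsupp 0
    rw [h1, Set.compl_empty] at h2
    have := (hprob 0).measure_univ
    rw [h2] at this
    exact zero_ne_one this
  -- the CDFs
  set F : ℕ → ℝ → ℝ := fun n x => (μ n (Set.Iic x)).toReal with hF
  have hF01 : ∀ n x, F n x ∈ Set.Icc (0:ℝ) 1 := by
    intro n x
    constructor
    · exact ENNReal.toReal_nonneg
    · have h1 : μ n (Set.Iic x) ≤ 1 := prob_le_one
      calc (μ n (Set.Iic x)).toReal ≤ (1 : ℝ≥0∞).toReal :=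
            ENNReal.toReal_mono ENNReal.one_ne_top h1
        _ = 1 := by simp
  have hFmono : ∀ n, Monotone (F n) := by
    intro n x y hxy
    exact ENNReal.toReal_mono (measure_ne_top _ _) (measure_mono (Set.Iic_subset_Iic.2 hxy))
  have hF0 : ∀ n, ∀ x, x < a → F n x = 0 := by
    intro n x hx
    have h1 : Set.Iic x ⊆ (Set.Icc a b)ᶜ := by
      intro y hy
      simp only [Set.mem_compl_iff, Set.mem_Icc, not_and, not_le]
      intro hay
      exact absurd (lt_of_le_of_lt (hay.trans hy) hx) (lt_irrefl a)
    have := measure_mono_null h1 (hsupp n)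
    simp [hF, this]
  have hF1 : ∀ n, ∀ x, b ≤ x → F n x = 1 := by
    intro n x hx
    have h1 : (Set.Iic x)ᶜ ⊆ (Set.Icc a b)ᶜ := by
      intro y hy
      simp only [Set.mem_compl_iff, Set.mem_Iic, not_le] at hy
      simp only [Set.mem_compl_iff, Set.mem_Icc, not_and, not_le]
      intro _
      exact lt_of_le_of_lt hx hy
    have h2 : μ n (Set.Iic x)ᶜ = 0 := measure_mono_null h1 (hsupp n)
    have h3 : μ n (Set.Iic x) = 1 := (prob_compl_eq_zero_iff measurableSet_Iic).1 h2
    simp [hF, h3]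
  -- subsequence converging on rationals
  obtain ⟨L, φ, hφ, hconv⟩ :=
    CompactSpace.tendsto_subseq (fun n (q : ℚ) => (⟨F n q, hF01 n q⟩ : Set.Icc (0:ℝ) 1))
  have hq : ∀ q : ℚ, Tendsto (fun n => F (φ n) q) atTop (nhds ((L q : ℝ))) := by
    intro q
    have h1 := tendsto_pi_nhds.1 hconv q
    exact (continuous_subtype_val.tendsto _).comp h1
  set G : ℚ → ℝ := fun q => (L q : ℝ) with hG
  have hGmono : ∀ q r : ℚ, q ≤ r → G q ≤ G r := by
    intro q r hqr
    exact le_of_tendsto_of_tendsto (hq q) (hq r)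
      (Eventually.of_forall fun n => hFmono (φ n) (by exact_mod_cast hqr))
  have hG01 : ∀ q, G q ∈ Set.Icc (0:ℝ) 1 := fun q => (L q).2
  have hG0 : ∀ q : ℚ, (q : ℝ) < a → G q = 0 := by
    intro q hqa
    refine tendsto_nhds_unique (hq q) ?_
    have : (fun n => F (φ n) q) = fun _ => (0:ℝ) := funext fun n => hF0 _ _ hqa
    rw [this]
    exact tendsto_const_nhds
  have hG1 : ∀ q : ℚ, b ≤ (q : ℝ) → G q = 1 := by
    intro q hqb
    refine tendsto_nhds_unique (hq q) ?_
    have : (fun n => F (φ n) q) = fun _ => (1:ℝ) := funext fun n => hF1 _ _ hqb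
    rw [this]
    exact tendsto_const_nhds
  -- the limit CDF
  set Fl : ℝ → ℝ := fun x => sInf (G '' {q : ℚ | x < (q : ℝ)}) with hFl
  have hne : ∀ x : ℝ, (G '' {q : ℚ | x < (q : ℝ)}).Nonempty := by
    intro x
    obtain ⟨q, hq'⟩ := exists_rat_gt x
    exact ⟨G q, q, hq', rfl⟩
  have hbdd : ∀ x : ℝ, BddBelow (G '' {q : ℚ | x < (q : ℝ)}) := by
    intro x
    refine ⟨0, ?_⟩
    rintro y ⟨q, _, rfl⟩
    exact (hG01 q).1
  have hFl_le : ∀ (x : ℝ) (q : ℚ), x < (q:ℝ) → Fl x ≤ G q := by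
    intro x q h
    exact csInf_le (hbdd x) ⟨q, h, rfl⟩
  have hle_Fl : ∀ (x : ℝ) (q : ℚ), (q:ℝ) ≤ x → G q ≤ Fl x := by
    intro x q h
    apply le_csInf (hne x)
    rintro y ⟨r, hr, rfl⟩
    apply hGmono
    exact_mod_cast h.trans_lt hr |>.le
  have hFlmono : Monotone Fl := by
    intro x y hxy
    apply csInf_le_csInf (hbdd x) (hne y)
    apply Set.image_mono
    intro q hq'
    exact lt_of_le_of_lt hxy hq'
  have hFl0 : ∀ x, x < a → Fl x = 0 := by
    intro x hx
    obtain ⟨q, hq1, hq2⟩ := exists_rat_btwn hx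
    have h1 := hFl_le x q hq1
    rw [hG0 q hq2] at h1
    have h2 : 0 ≤ Fl x := le_csInf (hne x) (by rintro y ⟨r, _, rfl⟩; exact (hG01 r).1)
    linarith
  have hFl1 : ∀ x, b ≤ x → Fl x = 1 := by
    intro x hx
    have himg : G '' {q : ℚ | x < (q : ℝ)} = {1} := by
      apply Set.Subset.antisymm
      · rintro y ⟨q, hq', rfl⟩
        exact hG1 q (hx.trans hq'.le)
      · rintro y rfl
        obtain ⟨q, hq'⟩ := exists_rat_gt x
        exact ⟨q, hq', hG1 q (hx.trans hq'.le)⟩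
    rw [hFl]
    simp only
    rw [himg, csInf_singleton]
  have hFl_rc : ∀ x, ContinuousWithinAt Fl (Set.Ici x) x := by
    intro x
    rw [ContinuousWithinAt]
    rw [tendsto_order]
    constructor
    · intro c hc
      apply Filter.eventually_of_mem self_mem_nhdsWithin
      intro y hy
      exact lt_of_lt_of_le hc (hFlmono hy)
    · intro c hc
      obtain ⟨y, ⟨q, hq', rfl⟩, hyc⟩ := exists_lt_of_csInf_lt (hne x) hc
      have hmem : Set.Iio (q:ℝ) ∈ nhdsWithin x (Set.Ici x) :=
        nhdsWithin_le_nhds (Iio_mem_nhds hq')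
      filter_upwards [hmem] with z hz
      exact lt_of_le_of_lt (hFl_le z q hz) hyc
  set Fs : StieltjesFunction ℝ := ⟨Fl, hFlmono, hFl_rc⟩ with hFs
  have hbot : Tendsto Fl atBot (nhds 0) := by
    apply Tendsto.congr' _ (tendsto_const_nhds (α := ℝ))
    filter_upwards [eventually_lt_atBot a] with x hx
    exact (hFl0 x hx).symm
  have htop : Tendsto Fl atTop (nhds 1) := by
    apply Tendsto.congr' _ (tendsto_const_nhds (α := ℝ))
    filter_upwards [eventually_ge_atTop b] with x hx
    exact (hFl1 x hx).symm
  set ν : Measure ℝ := Fs.measure with hν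
  haveI hνp : IsProbabilityMeasure ν := Fs.isProbabilityMeasure hbot htop
  have hFseq : ∀ x, Fs x = Fl x := fun x => rfl
  have hsuppν : ν (Set.Icc a b)ᶜ = 0 := by
    have hcompl : (Set.Icc a b)ᶜ = Set.Iio a ∪ Set.Ioi b := by
      ext x
      simp only [Set.mem_compl_iff, Set.mem_Icc, Set.mem_union, Set.mem_Iio, Set.mem_Ioi,
        not_and, not_le]
      constructor
      · intro h
        rcases lt_or_ge x a with h' | h'
        · exact Or.inl h'
        · exact Or.inr (h h')
      · rintro (h' | h') h''
        · exact absurd h'' (not_le.2 h')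
        · exact h'
    rw [hcompl]
    apply measure_union_null
    · -- Iio a
      have hsub : Set.Iio a ⊆ ⋃ n : ℕ, Set.Iic (a - 1/(n+1)) := by
        intro y hy
        obtain ⟨n, hn⟩ := exists_nat_one_div_lt (show (0:ℝ) < a - y from sub_pos.2 hy)
        exact Set.mem_iUnion.2 ⟨n, by simp only [Set.mem_Iic]; linarith⟩
      apply measure_mono_null hsub
      apply measure_iUnion_null
      intro n
      rw [hν, Fs.measure_Iic hbot]
      have hlt : a - 1/(n+1) < a := by
        have : (0:ℝ) < 1/(n+1) := by positivity
        linarith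
      rw [hFseq, hFl0 _ hlt]
      simp
    · -- Ioi b
      have h1 : Set.Ioi b = (Set.Iic b)ᶜ := Set.compl_Iic.symm
      rw [h1]
      rw [measure_compl measurableSet_Iic (measure_ne_top _ _)]
      rw [hν, Fs.measure_Iic hbot, hFseq, hFl1 b le_rfl]
      simp
  -- pointwise convergence at continuity points
  have hptwise : ∀ x, ContinuousAt Fl x →
      Tendsto (fun n => F (φ n) x) atTop (nhds (Fl x)) := by
    intro x hcont
    rw [tendsto_order]
    constructor
    · -- ∀ c < Fl x, eventually c < F (φ n) x
      intro c hc
      have h1 : ∀ᶠ y in nhds x, c < Fl y := hcont.eventually (eventually_gt_nhds hc)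
      have h2 : ∀ᶠ y in nhdsWithin x (Set.Iio x), c < Fl y ∧ y ∈ Set.Iio x :=
        (h1.filter_mono nhdsWithin_le_nhds).and eventually_mem_nhdsWithin
      obtain ⟨y, hy2, hy1⟩ := h2.exists
      obtain ⟨q, hq1, hq2⟩ := exists_rat_btwn (Set.mem_Iio.1 hy1)
      have h3 : c < G q := lt_of_lt_of_le hy2 ((hFl_le y q hq1).trans (le_refl _))
      have h4 : ∀ᶠ n in atTop, c < F (φ n) q := (hq q).eventually_const_lt h3
      filter_upwards [h4] with n hn
      exact lt_of_lt_of_le hn (hFmono (φ n) hq2.le)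
    · intro c hc
      obtain ⟨y, ⟨q, hq', rfl⟩, hyc⟩ := exists_lt_of_csInf_lt (hne x) hc
      have h4 : ∀ᶠ n in atTop, F (φ n) q < c := (hq q).eventually_lt_const hyc
      filter_upwards [h4] with n hn
      exact lt_of_le_of_lt (hFmono (φ n) hq'.le) hn
  have hFlnn : ∀ x, 0 ≤ Fl x := fun x =>
    le_csInf (hne x) (by rintro y ⟨r, _, rfl⟩; exact (hG01 r).1)
  have hμIoi : ∀ n t, (μ n (Set.Ioi t)).toReal = 1 - F n t := by
    intro n t
    have h1 : Set.Ioi t = (Set.Iic t)ᶜ := Set.compl_Iic.symm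
    rw [h1, prob_compl_eq_one_sub measurableSet_Iic]
    rw [ENNReal.toReal_sub_of_le prob_le_one ENNReal.one_ne_top]
    simp [hF]
  have hνIic : ∀ t, (ν (Set.Iic t)).toReal = Fl t := by
    intro t
    rw [hν, Fs.measure_Iic hbot, hFseq]
    rw [sub_zero, ENNReal.toReal_ofReal (hFlnn t)]
  have hνIoi : ∀ t, (ν (Set.Ioi t)).toReal = 1 - Fl t := by
    intro t
    have h1 : Set.Ioi t = (Set.Iic t)ᶜ := Set.compl_Iic.symm
    rw [h1, prob_compl_eq_one_sub measurableSet_Iic]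
    rw [ENNReal.toReal_sub_of_le prob_le_one ENNReal.one_ne_top]
    rw [hνIic]
    simp
  have hD : {x : ℝ | ¬ ContinuousAt Fl x}.Countable := hFlmono.countable_not_continuousAt
  set C : ℝ := max |a| |b| with hCdef
  have hmoments : ∀ k : ℕ, ∫ x, x ^ k ∂ν = m k := by
    intro k
    match k with
    | 0 =>
      have h1 : (fun n => ∫ x, x ^ 0 ∂(μ n)) = fun _ => (1:ℝ) := by
        funext n
        simp
      have h2 := hmom 0
      rw [h1] at h2
      have h3 : m 0 = 1 := tendsto_nhds_unique tendsto_const_nhds h2 |>.symm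
      rw [h3]
      simp
    | (k + 1) =>
      have hνf := mom_formula hab ν hsuppν k
      have hμf : ∀ n, ∫ x, x ^ (k+1) ∂(μ (φ n))
          = a ^ (k+1) + ∫ t in Set.Ioc a b,
              (((k:ℝ)+1) * t ^ k) * (μ (φ n) (Set.Ioi t)).toReal :=
        fun n => mom_formula hab (μ (φ n)) (hsupp (φ n)) k
      have hdom : Tendsto
          (fun n => ∫ t in Set.Ioc a b, (((k:ℝ)+1) * t ^ k) * (μ (φ n) (Set.Ioi t)).toReal)
          atTop
          (nhds (∫ t in Set.Ioc a b, (((k:ℝ)+1) * t ^ k) * (ν (Set.Ioi t)).toReal)) := by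
        apply tendsto_integral_of_dominated_convergence
          (bound := fun _ => ((k:ℝ)+1) * C ^ k)
        · intro n
          have heq : (fun t => (((k:ℝ)+1) * t ^ k) * (μ (φ n) (Set.Ioi t)).toReal)
              = fun t => (((k:ℝ)+1) * t ^ k) * (1 - F (φ n) t) := by
            funext t; rw [hμIoi]
          rw [heq]
          apply Measurable.aestronglyMeasurable
          exact (by fun_prop : Measurable fun t : ℝ => ((k:ℝ)+1) * t ^ k).mul
            ((measurable_const.sub (hFmono (φ n)).measurable))
        · exact integrable_const _
        · intro n
          filter_upwards [ae_restrict_mem measurableSet_Ioc] with t ht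
          rw [hμIoi]
          rw [Real.norm_eq_abs, abs_mul]
          have h1 : |((k:ℝ)+1) * t ^ k| ≤ ((k:ℝ)+1) * C ^ k := by
            rw [abs_mul, abs_pow]
            have hk : |((k:ℝ)+1)| = (k:ℝ)+1 := abs_of_nonneg (by positivity)
            rw [hk]
            apply mul_le_mul_of_nonneg_left _ (by positivity)
            exact pow_le_pow_left₀ (abs_nonneg t) (mom_abs_le ht.1.le ht.2) k
          have h2 : |1 - F (φ n) t| ≤ 1 := by
            have := (hF01 (φ n) t).1
            have := (hF01 (φ n) t).2
            rw [abs_le]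
            constructor <;> linarith
          calc |((k:ℝ)+1) * t ^ k| * |1 - F (φ n) t|
              ≤ (((k:ℝ)+1) * C ^ k) * 1 :=
                mul_le_mul h1 h2 (abs_nonneg _) (le_trans (abs_nonneg _) h1)
            _ = ((k:ℝ)+1) * C ^ k := mul_one _
        · have hnull : (volume.restrict (Set.Ioc a b)) {x : ℝ | ¬ ContinuousAt Fl x} = 0 := by
            apply measure_mono_null (Set.Subset.refl _)
            rw [Measure.restrict_apply₀']
            · exact measure_mono_null Set.inter_subset_left (hD.measure_zero volume)
            · exact measurableSet_Ioc.nullMeasurableSet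
          have hae2 : ∀ᵐ t ∂(volume.restrict (Set.Ioc a b)), ContinuousAt Fl t :=
            ae_iff.2 hnull
          filter_upwards [hae2] with t hcont
          rw [hνIoi]
          have h1 : Tendsto (fun n => 1 - F (φ n) t) atTop (nhds (1 - Fl t)) :=
            tendsto_const_nhds.sub (hptwise t hcont)
          have heq : ∀ n, (((k:ℝ)+1) * t ^ k) * (μ (φ n) (Set.Ioi t)).toReal
              = (((k:ℝ)+1) * t ^ k) * (1 - F (φ n) t) := fun n => by rw [hμIoi]
          simp only [heq]
          exact h1.const_mul _
      have hφtop : Tendsto φ atTop atTop := hφ.tendsto_atTop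
      have hsub : Tendsto (fun n => ∫ x, x ^ (k+1) ∂(μ (φ n))) atTop (nhds (m (k+1))) :=
        (hmom (k+1)).comp hφtop
      have hsub2 : Tendsto (fun n => ∫ x, x ^ (k+1) ∂(μ (φ n))) atTop
          (nhds (a ^ (k+1) + ∫ t in Set.Ioc a b,
            (((k:ℝ)+1) * t ^ k) * (ν (Set.Ioi t)).toReal)) := by
        simp only [hμf]
        exact (tendsto_const_nhds.add hdom)
      have := tendsto_nhds_unique hsub hsub2
      rw [hνf, ← this]
  -- integrability facts
  have hint_pow : ∀ (θ : Measure ℝ), IsProbabilityMeasure θ → θ (Set.Icc a b)ᶜ = 0 →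
      ∀ i : ℕ, Integrable (fun x => x ^ i) θ := by
    intro θ hθp hθs i
    haveI := hθp
    exact mom_integrable θ hθs (by fun_prop) (C := C ^ i) (by
      intro x hx
      rw [abs_pow]
      exact pow_le_pow_left₀ (abs_nonneg x) (mom_abs_le hx.1 hx.2) i)
  have hpoly_int : ∀ (θ : Measure ℝ), IsProbabilityMeasure θ → θ (Set.Icc a b)ᶜ = 0 →
      ∀ p : Polynomial ℝ,
      ∫ x, p.eval x ∂θ
        = ∑ i ∈ Finset.range (p.natDegree + 1), p.coeff i * ∫ x, x ^ i ∂θ := by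
    intro θ hθp hθs p
    haveI := hθp
    have heval : (fun x : ℝ => p.eval x)
        = fun x => ∑ i ∈ Finset.range (p.natDegree + 1), p.coeff i * x ^ i := by
      funext x
      exact p.eval_eq_sum_range x
    rw [heval]
    rw [integral_finset_sum _ (fun i _ => (hint_pow θ hθp hθs i).const_mul _)]
    congr 1
    funext i
    rw [integral_const_mul]
  -- convergence for polynomials
  have hpolytendsto : ∀ p : Polynomial ℝ,
      Tendsto (fun n => ∫ x, p.eval x ∂(μ n)) atTop (nhds (∫ x, p.eval x ∂ν)) := by
    intro p
    have h1 : (fun n => ∫ x, p.eval x ∂(μ n))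
        = fun n => ∑ i ∈ Finset.range (p.natDegree + 1), p.coeff i * ∫ x, x ^ i ∂(μ n) :=
      funext fun n => hpoly_int (μ n) (hprob n) (hsupp n) p
    rw [h1, hpoly_int ν hνp hsuppν p]
    apply tendsto_finset_sum
    intro i _
    have h2 : ∫ x, x ^ i ∂ν = m i := hmoments i
    rw [h2]
    exact (hmom i).const_mul _
  -- the weak convergence
  have hweak : ∀ f : BoundedContinuousFunction ℝ ℝ,
      Tendsto (fun n => ∫ x, f x ∂(μ n)) atTop (nhds (∫ x, f x ∂ν)) := by
    intro f
    rw [Metric.tendsto_atTop]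
    intro ε hε
    obtain ⟨p, hp⟩ := exists_polynomial_near_of_continuousOn a b f
      f.continuous.continuousOn (ε/4) (by positivity)
    obtain ⟨N, hN⟩ := Metric.tendsto_atTop.1 (hpolytendsto p) (ε/4) (by positivity)
    refine ⟨N, fun n hn => ?_⟩
    obtain ⟨Cp, hCp⟩ := isCompact_Icc.exists_bound_of_continuousOn
      (p.continuous_aeval.continuousOn : ContinuousOn (fun x : ℝ => p.eval x) (Set.Icc a b))
    have hintp : ∀ (θ : Measure ℝ), IsProbabilityMeasure θ → θ (Set.Icc a b)ᶜ = 0 →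
        Integrable (fun x => p.eval x) θ := by
      intro θ hθp hθs
      haveI := hθp
      exact mom_integrable θ hθs (by fun_prop) (C := |Cp|) (fun x hx =>
        le_trans (by simpa using hCp x hx) (le_abs_self Cp))
    have hclose : ∀ (θ : Measure ℝ), IsProbabilityMeasure θ → θ (Set.Icc a b)ᶜ = 0 →
        |∫ x, f x ∂θ - ∫ x, p.eval x ∂θ| ≤ ε/4 := by
      intro θ hθp hθs
      haveI := hθp
      rw [← integral_sub (f.integrable θ) (hintp θ hθp hθs)]
      have hb1 : ∀ᵐ x ∂θ, ‖f x - p.eval x‖ ≤ ε/4 := by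
        filter_upwards [mom_ae θ hθs] with x hx
        rw [Real.norm_eq_abs, abs_sub_comm]
        exact (hp x hx).le
      calc |∫ x, (f x - p.eval x) ∂θ| ≤ ε/4 * (θ Set.univ).toReal :=
            norm_integral_le_of_norm_le_const hb1
        _ = ε/4 := by simp
    have h1 := hclose (μ n) (hprob n) (hsupp n)
    have h2 := hclose ν hνp hsuppν
    have h3 := hN n hn
    rw [Real.dist_eq] at h3 ⊢
    calc |∫ x, f x ∂(μ n) - ∫ x, f x ∂ν|
        ≤ |∫ x, f x ∂(μ n) - ∫ x, p.eval x ∂(μ n)|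
          + |∫ x, p.eval x ∂(μ n) - ∫ x, p.eval x ∂ν|
          + |∫ x, p.eval x ∂ν - ∫ x, f x ∂ν| := by
          have htri : ∫ x, f x ∂(μ n) - ∫ x, f x ∂ν
              = (∫ x, f x ∂(μ n) - ∫ x, p.eval x ∂(μ n))
                + (∫ x, p.eval x ∂(μ n) - ∫ x, p.eval x ∂ν)
                + (∫ x, p.eval x ∂ν - ∫ x, f x ∂ν) := by ring
          rw [htri]
          exact le_trans (abs_add_le _ _) (add_le_add_left (abs_add_le _ _) _)
      _ < ε := by
          have h2' : |∫ x, p.eval x ∂ν - ∫ x, f x ∂ν| ≤ ε/4 := by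
            rw [abs_sub_comm]; exact h2
          linarith
  exact ⟨ν, hνp, hsuppν, hmoments, hweak⟩
end

section
/- Let (X_i)_{i∈ℕ} be an exchangeable sequence of {0,1}-valued random variables and let S_N = (1/N)·Σ_{i=1}^N X_i. Then for every k ∈ ℕ, E(S_N^k) → E(X_1·X_2·...·X_k) as N → ∞. -/
open MeasureTheory Finset Filter

def Exchangeable {Ω : Type*} [MeasurableSpace Ω] (P : Measure Ω) (X : ℕ → Ω → ℝ) : Prop :=
  ∀ (N : ℕ) (σ : Equiv.Perm (Fin N)),
    Measure.map (fun ω (i : Fin N) => X (σ i) ω) P =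
      Measure.map (fun ω (i : Fin N) => X i ω) P

/-- Any two injections `Fin k → Fin N` are related by a permutation of `Fin N`. -/
lemma exists_perm_comp' {k N : ℕ} (f g : Fin k → Fin N) (hf : Function.Injective f)
    (hg : Function.Injective g) : ∃ σ : Equiv.Perm (Fin N), ∀ i, σ (f i) = g i := by
  classical
  have hcard : Fintype.card ((Set.range f)ᶜ : Set (Fin N)) =
      Fintype.card ((Set.range g)ᶜ : Set (Fin N)) := by
    rw [Fintype.card_compl_set, Fintype.card_compl_set,
      Set.card_range_of_injective hf, Set.card_range_of_injective hg]
  let e : ((Set.range f)ᶜ : Set (Fin N)) ≃ ((Set.range g)ᶜ : Set (Fin N)) :=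
    Fintype.equivOfCardEq hcard
  let σ : Equiv.Perm (Fin N) :=
    (Equiv.Set.sumCompl (Set.range f)).symm.trans
      ((((Equiv.ofInjective f hf).symm.trans (Equiv.ofInjective g hg)).sumCongr e).trans
        (Equiv.Set.sumCompl (Set.range g)))
  refine ⟨σ, fun i => ?_⟩
  have h1 : (Equiv.Set.sumCompl (Set.range f)).symm (f i) = Sum.inl ⟨f i, ⟨i, rfl⟩⟩ :=
    Equiv.Set.sumCompl_symm_apply_of_mem _
  simp [σ, h1, Equiv.ofInjective_symm_apply]

/-- Integrals of products over injectively-chosen coordinates only depend on the number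
of coordinates, for an exchangeable sequence. -/
lemma exchange_integral' {Ω : Type*} [MeasurableSpace Ω]
    (P : Measure Ω) (X : ℕ → Ω → ℝ) (hmeas : ∀ i, Measurable (X i))
    (hexch : Exchangeable P X)
    {k N : ℕ} (g : Fin k → Fin N) (hg : Function.Injective g) :
    ∫ ω, ∏ i : Fin k, X (g i) ω ∂P = ∫ ω, ∏ i ∈ Finset.range k, X i ω ∂P := by
  have hkN : k ≤ N := by
    simpa using Fintype.card_le_of_injective g hg
  have hfinj : Function.Injective (Fin.castLE hkN) := Fin.castLE_injective hkN
  obtain ⟨σ, hσ⟩ := exists_perm_comp' (Fin.castLE hkN) g hfinj hg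
  have hF : Measurable (fun y : Fin N → ℝ => ∏ i : Fin k, y (Fin.castLE hkN i)) :=
    Finset.measurable_prod _ (fun i _ => measurable_pi_apply _)
  have hm1 : Measurable (fun ω (i : Fin N) => X (σ i) ω) :=
    measurable_pi_lambda _ (fun i => hmeas _)
  have hm2 : Measurable (fun ω (i : Fin N) => X i ω) :=
    measurable_pi_lambda _ (fun i => hmeas _)
  have key : ∫ y, (∏ i : Fin k, y (Fin.castLE hkN i))
        ∂(Measure.map (fun ω (i : Fin N) => X (σ i) ω) P)
      = ∫ y, (∏ i : Fin k, y (Fin.castLE hkN i))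
        ∂(Measure.map (fun ω (i : Fin N) => X i ω) P) := by
    rw [hexch N σ]
  rw [integral_map hm1.aemeasurable hF.aestronglyMeasurable,
    integral_map hm2.aemeasurable hF.aestronglyMeasurable] at key
  simp only [hσ] at key
  rw [key]
  congr 1
  ext ω
  rw [← Fin.prod_univ_eq_prod_range (fun i => X i ω) k]
  simp [Fin.coe_castLE]

lemma descFactorial_ratio' (k : ℕ) :
    Tendsto (fun N : ℕ => (N.descFactorial k : ℝ) / (N : ℝ) ^ k) atTop (nhds 1) := by
  have h : ∀ᶠ N : ℕ in atTop, (N.descFactorial k : ℝ) / (N : ℝ) ^ k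
      = ∏ i ∈ Finset.range k, (1 - (i : ℝ) / N) := by
    filter_upwards [eventually_ge_atTop (max k 1)] with N hN
    have hk : k ≤ N := le_trans (le_max_left _ _) hN
    have hN1 : (1:ℕ) ≤ N := le_trans (le_max_right _ _) hN
    have hNpos : (0:ℝ) < N := by exact_mod_cast hN1
    rw [Nat.descFactorial_eq_prod_range, Nat.cast_prod]
    rw [show ((N:ℝ)) ^ k = ∏ _i ∈ Finset.range k, (N:ℝ) by
      rw [Finset.prod_const, Finset.card_range]]
    rw [← Finset.prod_div_distrib]
    refine Finset.prod_congr rfl (fun i hi => ?_)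
    have hik : i ≤ N := le_trans (le_of_lt (Finset.mem_range.mp hi)) hk
    rw [Nat.cast_sub hik]
    field_simp
  have hlim : Tendsto (fun N : ℕ => ∏ i ∈ Finset.range k, (1 - (i : ℝ) / N))
      atTop (nhds 1) := by
    have : Tendsto (fun N : ℕ => ∏ i ∈ Finset.range k, (1 - (i : ℝ) / N))
        atTop (nhds (∏ _i ∈ Finset.range k, (1:ℝ))) := by
      refine tendsto_finset_prod _ (fun i _ => ?_)
      have : Tendsto (fun N : ℕ => (i : ℝ) / N) atTop (nhds 0) := by
        simpa [div_eq_mul_inv] using tendsto_natCast_atTop_atTop.inv_tendsto_atTop.const_mul (i:ℝ)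
      simpa using (tendsto_const_nhds (x := (1:ℝ))).sub this
    simpa using this
  exact hlim.congr' (h.mono fun N hN => hN.symm)

/-- Number of injective maps `Fin k → Fin N`. -/
lemma card_injective_filter (k N : ℕ) :
    ((Finset.univ : Finset (Fin k → Fin N)).filter
      (fun g => Function.Injective g)).card = N.descFactorial k := by
  classical
  rw [← Fintype.card_subtype]
  rw [Fintype.card_congr (Equiv.subtypeInjectiveEquivEmbedding (Fin k) (Fin N))]
  simp [Fintype.card_embedding_eq]

/-- for an exchangeable {0,1}-valued sequence, the k-th moment of
S_N = (1/N)·Σ_{i<N} X_i converges to E(X_1 ⋯ X_k). -/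
theorem moments_of_average_tendsto {Ω : Type*} [MeasurableSpace Ω]
    (P : Measure Ω) [IsProbabilityMeasure P] (X : ℕ → Ω → ℝ)
    (hmeas : ∀ i, Measurable (X i))
    (hval : ∀ i ω, X i ω = 0 ∨ X i ω = 1)
    (hexch : Exchangeable P X) (k : ℕ) :
    Tendsto (fun N : ℕ => ∫ ω, ((N : ℝ)⁻¹ * ∑ i ∈ Finset.range N, X i ω) ^ k ∂P)
      atTop (nhds (∫ ω, ∏ i ∈ Finset.range k, X i ω ∂P)) := by
  classical
  set I₀ : ℝ := ∫ ω, ∏ i ∈ Finset.range k, X i ω ∂P with hI₀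
  -- basic bounds on the X's
  have hX0 : ∀ i ω, 0 ≤ X i ω := fun i ω => by rcases hval i ω with h | h <;> simp [h]
  have hX1 : ∀ i ω, X i ω ≤ 1 := fun i ω => by rcases hval i ω with h | h <;> simp [h]
  -- bounds for products
  have hprod0 : ∀ {m : ℕ} (g : Fin m → ℕ) (ω : Ω), 0 ≤ ∏ i : Fin m, X (g i) ω :=
    fun g ω => Finset.prod_nonneg fun i _ => hX0 _ _
  have hprod1 : ∀ {m : ℕ} (g : Fin m → ℕ) (ω : Ω), ∏ i : Fin m, X (g i) ω ≤ 1 :=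
    fun g ω => Finset.prod_le_one (fun i _ => hX0 _ _) (fun i _ => hX1 _ _)
  -- integrability of products
  have hint : ∀ {m : ℕ} (g : Fin m → ℕ),
      Integrable (fun ω => ∏ i : Fin m, X (g i) ω) P := by
    intro m g
    have hm : Measurable (fun ω => ∏ i : Fin m, X (g i) ω) :=
      Finset.measurable_prod _ (fun i _ => hmeas _)
    refine (integrable_const (1:ℝ)).mono' hm.aestronglyMeasurable ?_
    filter_upwards with ω
    rw [Real.norm_eq_abs, abs_of_nonneg (hprod0 g ω)]
    exact hprod1 g ω
  -- bounds on the integrals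
  have hIb : ∀ {m : ℕ} (g : Fin m → ℕ),
      0 ≤ (∫ ω, ∏ i : Fin m, X (g i) ω ∂P) ∧
      (∫ ω, ∏ i : Fin m, X (g i) ω ∂P) ≤ 1 := by
    intro m g
    constructor
    · exact integral_nonneg (fun ω => hprod0 g ω)
    · calc (∫ ω, ∏ i : Fin m, X (g i) ω ∂P) ≤ ∫ _, (1:ℝ) ∂P :=
          integral_mono (hint g) (integrable_const 1) (fun ω => hprod1 g ω)
        _ = 1 := by simp
  have hI₀b : 0 ≤ I₀ ∧ I₀ ≤ 1 := by
    have := hIb (m := k) (fun i => (i : ℕ))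
    rwa [show (∫ ω, ∏ i : Fin k, X i ω ∂P) = I₀ by
      rw [hI₀]; congr 1; ext ω; exact Fin.prod_univ_eq_prod_range (fun i => X i ω) k] at this
  -- rewrite the integral of the k-th power as a sum over tuples
  have hrw : ∀ N : ℕ,
      (∫ ω, ((N : ℝ)⁻¹ * ∑ i ∈ Finset.range N, X i ω) ^ k ∂P)
      = ((N:ℝ)⁻¹) ^ k * ∑ g : Fin k → Fin N, ∫ ω, ∏ i : Fin k, X ((g i : ℕ)) ω ∂P := by
    intro N
    have hpt : ∀ ω, ((N : ℝ)⁻¹ * ∑ i ∈ Finset.range N, X i ω) ^ k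
        = ((N:ℝ)⁻¹) ^ k * ∑ g : Fin k → Fin N, ∏ i : Fin k, X ((g i : ℕ)) ω := by
      intro ω
      rw [mul_pow]
      congr 1
      rw [← Fin.sum_univ_eq_sum_range (fun i => X i ω) N]
      rw [show ((∑ i : Fin N, X (i : ℕ) ω)) ^ k
          = ∏ _i : Fin k, (∑ j : Fin N, X (j : ℕ) ω) by
        rw [Finset.prod_const]; simp]
      rw [show (∏ _i : Fin k, ∑ j : Fin N, X (j : ℕ) ω)
          = ∏ i : Fin k, ∑ j ∈ (Finset.univ : Finset (Fin N)), X (j : ℕ) ω from rfl]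
      rw [Finset.prod_univ_sum]
      simp
    simp_rw [hpt]
    rw [integral_const_mul]
    congr 1
    rw [integral_finset_sum]
    exact fun g _ => hint _
  -- the eventual bound
  have hbound : ∀ᶠ N : ℕ in atTop,
      |(∫ ω, ((N : ℝ)⁻¹ * ∑ i ∈ Finset.range N, X i ω) ^ k ∂P) - I₀|
        ≤ 1 - (N.descFactorial k : ℝ) / (N : ℝ) ^ k := by
    filter_upwards [eventually_ge_atTop (max k 1)] with N hN
    have hk : k ≤ N := le_trans (le_max_left _ _) hN
    have hN1 : (1:ℕ) ≤ N := le_trans (le_max_right _ _) hN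
    have hNpos : (0:ℝ) < N := by exact_mod_cast hN1
    have hNk : (0:ℝ) < (N:ℝ) ^ k := pow_pos hNpos k
    rw [hrw N]
    set I : (Fin k → Fin N) → ℝ := fun g => ∫ ω, ∏ i : Fin k, X ((g i : ℕ)) ω ∂P with hIdef
    -- sum difference
    have hsum : ((N:ℝ)⁻¹) ^ k * (∑ g : Fin k → Fin N, I g) - I₀
        = ((N:ℝ)⁻¹) ^ k * (∑ g : Fin k → Fin N, (I g - I₀)) := by
      rw [Finset.sum_sub_distrib, Finset.sum_const, Finset.card_univ]
      have hcard : (Fintype.card (Fin k → Fin N) : ℝ) = (N:ℝ) ^ k := by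
        simp [Fintype.card_fun]
      rw [mul_sub]
      congr 1
      rw [nsmul_eq_mul, hcard, ← mul_assoc, ← mul_pow, inv_mul_cancel₀ (ne_of_gt hNpos)]
      simp
    rw [hsum]
    -- injective terms vanish
    have hzero : ∀ g ∈ (Finset.univ : Finset (Fin k → Fin N)).filter
        (fun g => Function.Injective g), I g - I₀ = 0 := by
      intro g hg
      rw [Finset.mem_filter] at hg
      rw [hIdef]
      simp only [sub_eq_zero]
      exact exchange_integral' P X hmeas hexch g hg.2
    have hsplit : (∑ g : Fin k → Fin N, (I g - I₀))
        = ∑ g ∈ (Finset.univ : Finset (Fin k → Fin N)).filter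
            (fun g => ¬ Function.Injective g), (I g - I₀) := by
      rw [← Finset.sum_filter_add_sum_filter_not Finset.univ (fun g => Function.Injective g)]
      rw [Finset.sum_eq_zero hzero, zero_add]
    rw [hsplit, abs_mul, abs_pow, abs_inv, Nat.abs_cast]
    have hterm : ∀ g : Fin k → Fin N, |I g - I₀| ≤ 1 := by
      intro g
      have h1 := hIb (m := k) (fun i => (g i : ℕ))
      have h2 := hI₀b
      rw [abs_sub_le_iff]
      constructor <;> linarith [h1.1, h1.2, h2.1, h2.2]
    have habs : |∑ g ∈ (Finset.univ : Finset (Fin k → Fin N)).filter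
        (fun g => ¬ Function.Injective g), (I g - I₀)|
        ≤ ((N:ℝ) ^ k - (N.descFactorial k : ℝ)) := by
      calc |∑ g ∈ _, (I g - I₀)| ≤ ∑ g ∈ (Finset.univ : Finset (Fin k → Fin N)).filter
            (fun g => ¬ Function.Injective g), |I g - I₀| := Finset.abs_sum_le_sum_abs _ _
        _ ≤ ∑ _g ∈ (Finset.univ : Finset (Fin k → Fin N)).filter
            (fun g => ¬ Function.Injective g), (1:ℝ) :=
          Finset.sum_le_sum (fun g _ => hterm g)
        _ = (((Finset.univ : Finset (Fin k → Fin N)).filter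
            (fun g => ¬ Function.Injective g)).card : ℝ) := by simp
        _ = ((N:ℝ) ^ k - (N.descFactorial k : ℝ)) := by
          rw [Finset.filter_not, Finset.card_sdiff_of_subset (Finset.filter_subset _ _)]
          rw [card_injective_filter k N, Finset.card_univ, Fintype.card_fun,
            Fintype.card_fin, Fintype.card_fin]
          have hle : N.descFactorial k ≤ N ^ k := Nat.descFactorial_le_pow N k
          rw [Nat.cast_sub hle]
          push_cast
          ring
    calc ((N:ℝ))⁻¹ ^ k * |∑ g ∈ _, (I g - I₀)|
        ≤ ((N:ℝ))⁻¹ ^ k * ((N:ℝ) ^ k - (N.descFactorial k : ℝ)) := by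
          exact mul_le_mul_of_nonneg_left habs (by positivity)
      _ = 1 - (N.descFactorial k : ℝ) / (N : ℝ) ^ k := by
          rw [mul_sub, ← mul_pow, inv_mul_cancel₀ (ne_of_gt hNpos), one_pow]
          rw [inv_pow, inv_mul_eq_div]
  -- assemble
  have hb : Tendsto (fun N : ℕ => 1 - (N.descFactorial k : ℝ) / (N : ℝ) ^ k)
      atTop (nhds 0) := by
    have := (tendsto_const_nhds (x := (1:ℝ))).sub (descFactorial_ratio' k)
    simpa using this
  rw [tendsto_iff_dist_tendsto_zero]
  simp only [Real.dist_eq]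
  exact squeeze_zero' (Eventually.of_forall (fun N => abs_nonneg _)) hbound hb
end

section
/- Let (X_i)_{i∈ℕ} be an exchangeable sequence of {0,1}-valued random variables with de Finetti measure μ (the weak limit of the laws of (1/N)Σ_{i=1}^N X_i), and let (Y_i) be the μ-mixture of i.i.d. Bernoulli sequences. Then for every N and k, E((Σ_{i=1}^N X_i)^k) = E((Σ_{i=1}^N Y_i)^k). -/
open MeasureTheory Finset

def IsBernoulliMixture {Ω : Type*} [MeasurableSpace Ω] (P : Measure Ω)
    (Y : ℕ → Ω → ℝ) (μ : Measure ℝ) : Prop :=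
  ∀ (k : ℕ) (y : Fin k → ℝ), (∀ j, y j = 0 ∨ y j = 1) →
    P {ω | ∀ j : Fin k, Y j.val ω = y j}
      = ENNReal.ofReal (∫ p, ∏ j, (if y j = 1 then p else 1 - p) ∂μ)

/- ## Auxiliary lemmas -/

lemma pow_eq_self_of01 {x : ℝ} (h : x = 0 ∨ x = 1) {n : ℕ} (hn : n ≠ 0) : x ^ n = x := by
  rcases h with h | h <;> simp [h, zero_pow hn]

lemma abs_prod_le_one {ι : Type*} {Z : ι → ℝ} (h : ∀ i, Z i = 0 ∨ Z i = 1) (S : Finset ι) :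
    |∏ i ∈ S, Z i| ≤ 1 := by
  have h0 : ∀ i, (0 : ℝ) ≤ Z i := fun i => by rcases h i with h' | h' <;> simp [h']
  have h1 : ∀ i, Z i ≤ 1 := fun i => by rcases h i with h' | h' <;> simp [h']
  rw [abs_of_nonneg (Finset.prod_nonneg fun i _ => h0 i)]
  exact Finset.prod_le_one (fun i _ => h0 i) (fun i _ => h1 i)

lemma prod_comp01 {k : ℕ} (Z : ℕ → ℝ) (hZ : ∀ i, Z i = 0 ∨ Z i = 1) (g : Fin k → ℕ) :
    ∏ j : Fin k, Z (g j) = ∏ i ∈ Finset.univ.image g, Z i := by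
  rw [Finset.prod_comp]
  refine Finset.prod_congr rfl fun i hi => ?_
  refine pow_eq_self_of01 (hZ i) ?_
  simp only [ne_eq, Finset.card_eq_zero, Finset.filter_eq_empty_iff, not_forall, not_not]
  obtain ⟨j, _, hj⟩ := Finset.mem_image.mp hi
  exact ⟨j, Finset.mem_univ j, hj⟩

lemma prod_ite_split (f g : ℕ → ℝ) {u w : Finset ℕ} (h : u ⊆ w) :
    ∏ j ∈ w, (if j ∈ u then f j else g j) = (∏ j ∈ u, f j) * ∏ j ∈ w \ u, g j := by
  have hw : w = u ∪ (w \ u) := (Finset.union_sdiff_of_subset h).symm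
  conv_lhs => rw [hw]
  rw [Finset.prod_union Finset.disjoint_sdiff]
  congr 1
  · exact Finset.prod_congr rfl fun j hj => if_pos hj
  · exact Finset.prod_congr rfl fun j hj => if_neg (Finset.mem_sdiff.mp hj).2

/-- Expansion of a product over `S` as a sum over cylinder-type products. -/
lemma expand_prod (f : ℕ → ℝ) {S : Finset ℕ} {m : ℕ} (hS : S ⊆ Finset.range m) :
    ∏ i ∈ S, f i
      = ∑ t ∈ (Finset.range m \ S).powerset,
          ∏ j ∈ Finset.range m, (if j ∈ S ∪ t then f j else 1 - f j) := by
  have key : ∀ t ∈ (Finset.range m \ S).powerset,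
      (∏ j ∈ Finset.range m, (if j ∈ S ∪ t then f j else 1 - f j))
        = (∏ i ∈ S, f i) * ((∏ i ∈ t, f i) * ∏ i ∈ (Finset.range m \ S) \ t, (1 - f i)) := by
    intro t ht
    rw [Finset.mem_powerset] at ht
    have hdisj : Disjoint S t :=
      Finset.disjoint_left.mpr fun a haS hat => (Finset.mem_sdiff.mp (ht hat)).2 haS
    have hut : S ∪ t ⊆ Finset.range m :=
      Finset.union_subset hS (ht.trans Finset.sdiff_subset)
    have hsd : Finset.range m \ (S ∪ t) = (Finset.range m \ S) \ t := by
      ext a; simp only [Finset.mem_sdiff, Finset.mem_union]; tauto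
    rw [prod_ite_split f (fun j => 1 - f j) hut, hsd, Finset.prod_union hdisj, mul_assoc]
  calc ∏ i ∈ S, f i
      = (∏ i ∈ S, f i) * ∏ i ∈ Finset.range m \ S, (f i + (1 - f i)) := by simp
    _ = (∏ i ∈ S, f i) * ∑ t ∈ (Finset.range m \ S).powerset,
          (∏ i ∈ t, f i) * ∏ i ∈ (Finset.range m \ S) \ t, (1 - f i) := by
        rw [Finset.prod_add]
    _ = ∑ t ∈ (Finset.range m \ S).powerset,
          (∏ i ∈ S, f i) * ((∏ i ∈ t, f i) * ∏ i ∈ (Finset.range m \ S) \ t, (1 - f i)) := by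
        rw [Finset.mul_sum]
    _ = ∑ t ∈ (Finset.range m \ S).powerset,
          ∏ j ∈ Finset.range m, (if j ∈ S ∪ t then f j else 1 - f j) :=
        (Finset.sum_congr rfl key).symm

lemma integrable_of_bound1 {α : Type*} [MeasurableSpace α] {ν : Measure α} [IsFiniteMeasure ν]
    {f : α → ℝ} (hf : AEStronglyMeasurable f ν) (h : ∀ᵐ a ∂ν, |f a| ≤ 1) : Integrable f ν :=
  Integrable.mono' (integrable_const 1) hf (by simpa [Real.norm_eq_abs] using h)

lemma ae_Icc_of_compl {μ : Measure ℝ} (hsupp : μ (Set.Icc 0 1)ᶜ = 0) :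
    ∀ᵐ p ∂μ, p ∈ Set.Icc (0 : ℝ) 1 := by
  rw [MeasureTheory.ae_iff]
  exact hsupp

/-- Integral of a cylinder product for the Bernoulli mixture. -/
lemma cylinder_int {Ω' : Type*} [MeasurableSpace Ω'] (Q : Measure Ω') [IsProbabilityMeasure Q]
    (Y : ℕ → Ω' → ℝ) (hYmeas : ∀ i, Measurable (Y i)) (hYval : ∀ i ω, Y i ω = 0 ∨ Y i ω = 1)
    (μ : Measure ℝ) [IsProbabilityMeasure μ] (hsupp : μ (Set.Icc 0 1)ᶜ = 0)
    (hmix : IsBernoulliMixture Q Y μ) (m : ℕ) (u : Finset ℕ) :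
    ∫ ω, ∏ j ∈ Finset.range m, (if j ∈ u then Y j ω else 1 - Y j ω) ∂Q
      = ∫ p, ∏ j ∈ Finset.range m, (if j ∈ u then p else 1 - p) ∂μ := by
  classical
  set y : Fin m → ℝ := fun j => if (j : ℕ) ∈ u then 1 else 0 with hy_def
  have hy : ∀ j, y j = 0 ∨ y j = 1 := fun j => by
    by_cases h : (j : ℕ) ∈ u <;> simp [hy_def, h]
  have hmix' := hmix m y hy
  set A : Set Ω' := {ω | ∀ j : Fin m, Y j.val ω = y j} with hA_def
  have hA : MeasurableSet A := by
    have : A = ⋂ j : Fin m, (Y j.val) ⁻¹' {y j} := by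
      ext ω; simp [hA_def, Set.mem_iInter]
    rw [this]
    exact MeasurableSet.iInter fun j => (hYmeas j.val) (measurableSet_singleton _)
  have hind : ∀ ω, ∏ j ∈ Finset.range m, (if j ∈ u then Y j ω else 1 - Y j ω)
      = Set.indicator A 1 ω := by
    intro ω
    by_cases hω : ω ∈ A
    · rw [Set.indicator_of_mem hω, Pi.one_apply]
      refine Finset.prod_eq_one fun j hj => ?_
      have hjm : j < m := Finset.mem_range.mp hj
      have h := hω ⟨j, hjm⟩
      by_cases hju : j ∈ u
      · simp only [hy_def, hju, if_true] at h
        simpa [hju] using h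
      · simp only [hy_def, hju, if_false] at h
        simp [hju, h]
    · rw [Set.indicator_of_notMem hω]
      have : ∃ j : Fin m, Y j.val ω ≠ y j := by
        by_contra hc; push_neg at hc; exact hω hc
      obtain ⟨j, hj⟩ := this
      refine Finset.prod_eq_zero (Finset.mem_range.mpr j.isLt) ?_
      by_cases hju : (j : ℕ) ∈ u
      · simp only [hy_def, hju, if_true] at hj
        rcases hYval j.val ω with h0 | h1
        · simp [hju, h0]
        · exact absurd h1 hj
      · simp only [hy_def, hju, if_false] at hj
        rcases hYval j.val ω with h0 | h1
        · exact absurd h0 hj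
        · simp [hju, h1]
  have hnonneg : 0 ≤ ∫ p, ∏ j : Fin m, (if y j = 1 then p else 1 - p) ∂μ := by
    refine integral_nonneg_of_ae ?_
    filter_upwards [ae_Icc_of_compl hsupp] with p hp
    exact Finset.prod_nonneg fun j _ => by
      split
      · exact hp.1
      · linarith [hp.2]
  have hprod_eq : ∀ p : ℝ, ∏ j : Fin m, (if y j = 1 then p else 1 - p)
      = ∏ j ∈ Finset.range m, (if j ∈ u then p else 1 - p) := by
    intro p
    rw [← Fin.prod_univ_eq_prod_range (fun j => if j ∈ u then p else 1 - p) m]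
    refine Finset.prod_congr rfl fun j _ => ?_
    by_cases hju : (j : ℕ) ∈ u <;> simp [hy_def, hju]
  calc ∫ ω, ∏ j ∈ Finset.range m, (if j ∈ u then Y j ω else 1 - Y j ω) ∂Q
      = ∫ ω, Set.indicator A 1 ω ∂Q := by
        exact integral_congr_ae (Filter.Eventually.of_forall hind)
    _ = (Q A).toReal := integral_indicator_one hA
    _ = (ENNReal.ofReal (∫ p, ∏ j : Fin m, (if y j = 1 then p else 1 - p) ∂μ)).toReal := by
        rw [hmix']
    _ = ∫ p, ∏ j : Fin m, (if y j = 1 then p else 1 - p) ∂μ := ENNReal.toReal_ofReal hnonneg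
    _ = ∫ p, ∏ j ∈ Finset.range m, (if j ∈ u then p else 1 - p) ∂μ := by
        exact integral_congr_ae (Filter.Eventually.of_forall fun p => hprod_eq p)

/-- Moments of products for the Bernoulli mixture. -/
lemma prod_Y_eq {Ω' : Type*} [MeasurableSpace Ω'] (Q : Measure Ω') [IsProbabilityMeasure Q]
    (Y : ℕ → Ω' → ℝ) (hYmeas : ∀ i, Measurable (Y i)) (hYval : ∀ i ω, Y i ω = 0 ∨ Y i ω = 1)
    (μ : Measure ℝ) [IsProbabilityMeasure μ] (hsupp : μ (Set.Icc 0 1)ᶜ = 0)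
    (hmix : IsBernoulliMixture Q Y μ) (S : Finset ℕ) :
    ∫ ω, ∏ i ∈ S, Y i ω ∂Q = ∫ p, p ^ S.card ∂μ := by
  classical
  obtain ⟨m, hS⟩ := S.exists_nat_subset_range
  have hfac01 : ∀ (u : Finset ℕ) (j : ℕ) (ω : Ω'),
      (if j ∈ u then Y j ω else 1 - Y j ω) = 0 ∨ (if j ∈ u then Y j ω else 1 - Y j ω) = 1 := by
    intro u j ω
    by_cases h : j ∈ u
    · simpa [h] using hYval j ω
    · rcases hYval j ω with h0 | h0 <;> simp [h, h0]
  have hmeasQ : ∀ u : Finset ℕ, Measurable fun ω =>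
      ∏ j ∈ Finset.range m, (if j ∈ u then Y j ω else 1 - Y j ω) := by
    intro u
    refine Finset.measurable_prod _ fun j _ => ?_
    by_cases h : j ∈ u <;> simp only [h, if_true, if_false]
    · exact hYmeas j
    · exact (measurable_const.sub (hYmeas j))
  have hintQ : ∀ u : Finset ℕ, Integrable
      (fun ω => ∏ j ∈ Finset.range m, (if j ∈ u then Y j ω else 1 - Y j ω)) Q := by
    intro u
    refine integrable_of_bound1 (hmeasQ u).aestronglyMeasurable ?_
    exact Filter.Eventually.of_forall fun ω =>
      abs_prod_le_one (fun j => hfac01 u j ω) (Finset.range m)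
  have hintμ : ∀ u : Finset ℕ, Integrable
      (fun p => ∏ j ∈ Finset.range m, (if j ∈ u then p else 1 - p)) μ := by
    intro u
    refine integrable_of_bound1 ?_ ?_
    · refine (Finset.measurable_prod _ fun j _ => ?_).aestronglyMeasurable
      by_cases h : j ∈ u <;> simp only [h, if_true, if_false]
      · exact measurable_id
      · exact measurable_const.sub measurable_id
    · filter_upwards [ae_Icc_of_compl hsupp] with p hp
      have h0 : ∀ j, (0:ℝ) ≤ (if j ∈ u then p else 1 - p) := by
        intro j; by_cases h : j ∈ u <;> simp [h] <;> linarith [hp.1, hp.2]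
      have h1 : ∀ j, (if j ∈ u then p else 1 - p) ≤ 1 := by
        intro j; by_cases h : j ∈ u <;> simp [h] <;> linarith [hp.1, hp.2]
      rw [abs_of_nonneg (Finset.prod_nonneg fun j _ => h0 j)]
      exact Finset.prod_le_one (fun j _ => h0 j) (fun j _ => h1 j)
  calc ∫ ω, ∏ i ∈ S, Y i ω ∂Q
      = ∫ ω, ∑ t ∈ (Finset.range m \ S).powerset,
          ∏ j ∈ Finset.range m, (if j ∈ S ∪ t then Y j ω else 1 - Y j ω) ∂Q := by
        exact integral_congr_ae (Filter.Eventually.of_forall fun ω =>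
          expand_prod (fun i => Y i ω) hS)
    _ = ∑ t ∈ (Finset.range m \ S).powerset,
          ∫ ω, ∏ j ∈ Finset.range m, (if j ∈ S ∪ t then Y j ω else 1 - Y j ω) ∂Q :=
        integral_finset_sum _ fun t _ => hintQ (S ∪ t)
    _ = ∑ t ∈ (Finset.range m \ S).powerset,
          ∫ p, ∏ j ∈ Finset.range m, (if j ∈ S ∪ t then p else 1 - p) ∂μ :=
        Finset.sum_congr rfl fun t _ =>
          cylinder_int Q Y hYmeas hYval μ hsupp hmix m (S ∪ t)
    _ = ∫ p, ∑ t ∈ (Finset.range m \ S).powerset,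
          ∏ j ∈ Finset.range m, (if j ∈ S ∪ t then p else 1 - p) ∂μ :=
        (integral_finset_sum _ fun t _ => hintμ (S ∪ t)).symm
    _ = ∫ p, p ^ S.card ∂μ := by
        refine integral_congr_ae (Filter.Eventually.of_forall fun p => ?_)
        dsimp only
        rw [← expand_prod (fun _ => p) hS, Finset.prod_const]

/-- Moments of products for the exchangeable sequence only depend on the cardinality. -/
lemma prod_X_eq {Ω : Type*} [MeasurableSpace Ω] (P : Measure Ω) [IsProbabilityMeasure P]
    (X : ℕ → Ω → ℝ) (hXmeas : ∀ i, Measurable (X i)) (hexch : Exchangeable P X)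
    (S : Finset ℕ) :
    ∫ ω, ∏ i ∈ S, X i ω ∂P = ∫ ω, ∏ i ∈ Finset.range S.card, X i ω ∂P := by
  classical
  obtain ⟨m, hS⟩ := S.exists_nat_subset_range
  have hcard : S.card ≤ m := by simpa using Finset.card_le_card hS
  set s : Finset (Fin m) := Finset.univ.filter (fun j => (j : ℕ) ∈ S) with hs_def
  set t : Finset (Fin m) := Finset.univ.filter (fun j => (j : ℕ) < S.card) with ht_def
  have hval_inj : ∀ (w : Finset (Fin m)), ∀ x ∈ w, ∀ y ∈ w,
      (x : ℕ) = (y : ℕ) → x = y := fun w x _ y _ h => Fin.ext h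
  have hsimage : s.image (fun j : Fin m => (j : ℕ)) = S := by
    ext i
    simp only [Finset.mem_image, hs_def, Finset.mem_filter, Finset.mem_univ, true_and]
    constructor
    · rintro ⟨j, hj, rfl⟩; exact hj
    · intro hi
      exact ⟨⟨i, Finset.mem_range.mp (hS hi)⟩, hi, rfl⟩
  have htimage : t.image (fun j : Fin m => (j : ℕ)) = Finset.range S.card := by
    ext i
    simp only [Finset.mem_image, ht_def, Finset.mem_filter, Finset.mem_univ, true_and,
      Finset.mem_range]
    constructor
    · rintro ⟨j, hj, rfl⟩; exact hj
    · intro hi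
      exact ⟨⟨i, lt_of_lt_of_le hi hcard⟩, hi, rfl⟩
  have hscard : s.card = S.card := by
    rw [← hsimage, Finset.card_image_of_injOn fun x hx y hy h => Fin.ext h]
  have htcard : t.card = S.card := by
    have := congrArg Finset.card htimage
    rwa [Finset.card_image_of_injOn fun x hx y hy h => Fin.ext h, Finset.card_range] at this
  have hcards : t.card = s.card := by rw [htcard, hscard]
  let e : {x : Fin m // x ∈ t} ≃ {x : Fin m // x ∈ s} := Finset.equivOfCardEq hcards
  let σ : Equiv.Perm (Fin m) := e.extendSubtype
  have hσt : ∀ x ∈ t, σ x ∈ s := fun x hx => e.extendSubtype_mem x hx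
  have himg : t.image σ = s := by
    refine Finset.eq_of_subset_of_card_le ?_ ?_
    · intro a ha
      obtain ⟨x, hx, rfl⟩ := Finset.mem_image.mp ha
      exact hσt x hx
    · rw [Finset.card_image_of_injective _ σ.injective, hcards]
  have hTmeas : ∀ τ : Equiv.Perm (Fin m), Measurable (fun ω (i : Fin m) => X (τ i) ω) :=
    fun τ => measurable_pi_lambda _ fun i => hXmeas _
  have hTmeas' : Measurable (fun ω (i : Fin m) => X i ω) :=
    measurable_pi_lambda _ fun i => hXmeas _
  set g : (Fin m → ℝ) → ℝ := fun v => ∏ j ∈ t, v j with hg_def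
  have hg : Measurable g := Finset.measurable_prod _ fun j _ => measurable_pi_apply j
  have hmap := hexch m σ
  have h1 : ∫ v, g v ∂(Measure.map (fun ω (i : Fin m) => X (σ i) ω) P)
      = ∫ ω, g (fun i => X (σ i) ω) ∂P :=
    integral_map (hTmeas σ).aemeasurable hg.aestronglyMeasurable
  have h2 : ∫ v, g v ∂(Measure.map (fun ω (i : Fin m) => X i ω) P)
      = ∫ ω, g (fun i => X i ω) ∂P :=
    integral_map hTmeas'.aemeasurable hg.aestronglyMeasurable
  have hmain : ∫ ω, ∏ j ∈ t, X (σ j) ω ∂P = ∫ ω, ∏ j ∈ t, X j ω ∂P := by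
    calc ∫ ω, ∏ j ∈ t, X (σ j) ω ∂P
        = ∫ v, g v ∂(Measure.map (fun ω (i : Fin m) => X (σ i) ω) P) := h1.symm
      _ = ∫ v, g v ∂(Measure.map (fun ω (i : Fin m) => X i ω) P) := by rw [hmap]
      _ = ∫ ω, ∏ j ∈ t, X j ω ∂P := h2
  calc ∫ ω, ∏ i ∈ S, X i ω ∂P
      = ∫ ω, ∏ j ∈ s, X j ω ∂P := by
        refine integral_congr_ae (Filter.Eventually.of_forall fun ω => ?_)
        dsimp only
        rw [← hsimage, Finset.prod_image (hval_inj s)]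
    _ = ∫ ω, ∏ j ∈ t, X (σ j) ω ∂P := by
        refine integral_congr_ae (Filter.Eventually.of_forall fun ω => ?_)
        dsimp only
        rw [← himg, Finset.prod_image (fun x _ y _ h => σ.injective h)]
    _ = ∫ ω, ∏ j ∈ t, X j ω ∂P := hmain
    _ = ∫ ω, ∏ i ∈ Finset.range S.card, X i ω ∂P := by
        refine integral_congr_ae (Filter.Eventually.of_forall fun ω => ?_)
        dsimp only
        rw [← htimage, Finset.prod_image (hval_inj t)]


lemma expandZ (μ : Measure ℝ) (N k : ℕ) {Ω'' : Type*} [MeasurableSpace Ω''] (R : Measure Ω'')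
    [IsProbabilityMeasure R] (Z : ℕ → Ω'' → ℝ) (hZm : ∀ i, Measurable (Z i))
    (hZv : ∀ i ω, Z i ω = 0 ∨ Z i ω = 1)
    (hkey : ∀ S : Finset ℕ, ∫ ω, ∏ i ∈ S, Z i ω ∂ R = ∫ p, p ^ S.card ∂μ) :
    ∫ ω, (∑ i ∈ Finset.range N, Z i ω) ^ k ∂ R
      = ∑ g ∈ Fintype.piFinset (fun _ : Fin k => Finset.range N),
          ∫ p, p ^ (Finset.univ.image g).card ∂μ := by
  classical
  have h1 : ∀ ω, (∑ i ∈ Finset.range N, Z i ω) ^ k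
      = ∑ g ∈ Fintype.piFinset (fun _ : Fin k => Finset.range N),
          ∏ i ∈ Finset.univ.image g, Z i ω := by
    intro ω
    rw [← Fin.prod_const k (∑ i ∈ Finset.range N, Z i ω), Finset.prod_univ_sum]
    exact Finset.sum_congr rfl fun g _ => prod_comp01 (fun i => Z i ω) (fun i => hZv i ω) g
  calc ∫ ω, (∑ i ∈ Finset.range N, Z i ω) ^ k ∂ R
      = ∫ ω, ∑ g ∈ Fintype.piFinset (fun _ : Fin k => Finset.range N),
          ∏ i ∈ Finset.univ.image g, Z i ω ∂ R :=
        integral_congr_ae (Filter.Eventually.of_forall h1)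
    _ = ∑ g ∈ Fintype.piFinset (fun _ : Fin k => Finset.range N),
          ∫ ω, ∏ i ∈ Finset.univ.image g, Z i ω ∂ R := by
        refine integral_finset_sum _ fun g _ => ?_
        refine integrable_of_bound1
          ((Finset.measurable_prod _ fun i _ => hZm i).aestronglyMeasurable) ?_
        exact Filter.Eventually.of_forall fun ω =>
          abs_prod_le_one (fun i => hZv i ω) _
    _ = ∑ g ∈ Fintype.piFinset (fun _ : Fin k => Finset.range N),
          ∫ p, p ^ (Finset.univ.image g).card ∂μ :=
        Finset.sum_congr rfl fun g _ => hkey _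

/-- if μ is the de Finetti measure of X (i.e. the probability measure
on [0,1] with moments m_k(μ) = E(X_1 ⋯ X_k)) and Y is the μ-mixture of i.i.d.
Bernoulli sequences, then Σ_{i<N} X_i and Σ_{i<N} Y_i have the same moments. -/
theorem sum_moments_eq_of_deFinetti {Ω Ω' : Type*} [MeasurableSpace Ω] [MeasurableSpace Ω']
    (P : Measure Ω) [IsProbabilityMeasure P] (Q : Measure Ω') [IsProbabilityMeasure Q]
    (X : ℕ → Ω → ℝ) (hXmeas : ∀ i, Measurable (X i))
    (hXval : ∀ i ω, X i ω = 0 ∨ X i ω = 1) (hexch : Exchangeable P X)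
    (μ : Measure ℝ) [IsProbabilityMeasure μ] (hsupp : μ (Set.Icc 0 1)ᶜ = 0)
    (hμ : ∀ k : ℕ, ∫ p, p ^ k ∂μ = ∫ ω, ∏ i ∈ Finset.range k, X i ω ∂P)
    (Y : ℕ → Ω' → ℝ) (hYmeas : ∀ i, Measurable (Y i))
    (hYval : ∀ i ω, Y i ω = 0 ∨ Y i ω = 1)
    (hmix : IsBernoulliMixture Q Y μ) (N k : ℕ) :
    ∫ ω, (∑ i ∈ Finset.range N, X i ω) ^ k ∂P
      = ∫ ω', (∑ i ∈ Finset.range N, Y i ω') ^ k ∂Q := by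
  classical
  have keyX : ∀ S : Finset ℕ, ∫ ω, ∏ i ∈ S, X i ω ∂P = ∫ p, p ^ S.card ∂μ := fun S => by
    rw [prod_X_eq P X hXmeas hexch S, ← hμ S.card]
  have keyY : ∀ S : Finset ℕ, ∫ ω, ∏ i ∈ S, Y i ω ∂Q = ∫ p, p ^ S.card ∂μ := fun S =>
    prod_Y_eq Q Y hYmeas hYval μ hsupp hmix S
  rw [expandZ μ N k P X hXmeas hXval keyX, expandZ μ N k Q Y hYmeas hYval keyY]
end

section
/- Let (X_i)_{i∈ℕ} be an exchangeable sequence of {0,1}-valued random variables with de Finetti measure μ, and (Y_i) the μ-mixture of i.i.d. Bernoulli sequences. Then for every N, the sums S_N = Σ_{i=1}^N X_i and T_N = Σ_{i=1}^N Y_i have the same distribution. -/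
open MeasureTheory Finset

section Aux

variable {Ω : Type*} [MeasurableSpace Ω] {P : Measure Ω} [IsProbabilityMeasure P]
  {X : ℕ → Ω → ℝ}

lemma prod_X_mem01 (hXval : ∀ i ω, X i ω = 0 ∨ X i ω = 1) {k : ℕ} (t : Finset (Fin k)) (ω : Ω) :
    (∏ j ∈ t, X (j : ℕ) ω) = 0 ∨ (∏ j ∈ t, X (j : ℕ) ω) = 1 := by
  classical
  induction t using Finset.induction with
  | empty => right; simp
  | @insert a u h ih =>
    rw [Finset.prod_insert h]
    rcases hXval (a : ℕ) ω with h1 | h1 <;> rcases ih with h2 | h2 <;> simp [h1, h2]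

lemma integrable_prod_X (hXmeas : ∀ i, Measurable (X i))
    (hXval : ∀ i ω, X i ω = 0 ∨ X i ω = 1) {k : ℕ} (t : Finset (Fin k)) :
    Integrable (fun ω => ∏ j ∈ t, X (j : ℕ) ω) P := by
  constructor
  · exact (Finset.measurable_prod t fun j _ => hXmeas j).aestronglyMeasurable
  · apply HasFiniteIntegral.of_bounded (C := 1)
    filter_upwards with ω
    rcases prod_X_mem01 hXval t ω with h | h <;> simp [h]

lemma moment_perm (hXmeas : ∀ i, Measurable (X i)) (hexch : Exchangeable P X)
    {k : ℕ} (σ : Equiv.Perm (Fin k)) (t : Finset (Fin k)) :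
    ∫ ω, ∏ j ∈ t, X ((σ j : Fin k) : ℕ) ω ∂P = ∫ ω, ∏ j ∈ t, X (j : ℕ) ω ∂P := by
  have hg : Measurable (fun v : Fin k → ℝ => ∏ j ∈ t, v j) :=
    Finset.measurable_prod t fun j _ => measurable_pi_apply j
  have h1 : Measurable (fun ω (i : Fin k) => X ((σ i : Fin k) : ℕ) ω) :=
    measurable_pi_lambda _ fun i => hXmeas _
  have h2 : Measurable (fun ω (i : Fin k) => X (i : ℕ) ω) :=
    measurable_pi_lambda _ fun i => hXmeas _
  have := congrArg (fun m => ∫ v, (∏ j ∈ t, v j) ∂m) (hexch k σ)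
  simpa [integral_map h1.aemeasurable hg.aestronglyMeasurable,
    integral_map h2.aemeasurable hg.aestronglyMeasurable] using this

lemma moment_subset (hXmeas : ∀ i, Measurable (X i)) (hexch : Exchangeable P X)
    {k : ℕ} (t : Finset (Fin k)) :
    ∫ ω, ∏ j ∈ t, X (j : ℕ) ω ∂P = ∫ ω, ∏ i ∈ Finset.range t.card, X i ω ∂P := by
  classical
  have hle : t.card ≤ k := by
    simpa using Finset.card_le_univ t
  set s : Finset (Fin k) := Finset.map (Fin.castLEEmb hle) Finset.univ with hs
  have hscard : s.card = t.card := by simp [hs]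
  have e : {x : Fin k // x ∈ s} ≃ {x : Fin k // x ∈ t} := Finset.equivOfCardEq hscard
  set σ : Equiv.Perm (Fin k) := e.extendSubtype with hσ
  have himg : s.image σ = t := by
    apply Finset.eq_of_subset_of_card_le
    · intro x hx
      obtain ⟨a, ha, rfl⟩ := Finset.mem_image.mp hx
      exact e.extendSubtype_mem a ha
    · rw [Finset.card_image_of_injective _ σ.injective, hscard]
  have h1 : ∀ ω, ∏ j ∈ t, X (j : ℕ) ω = ∏ j ∈ s, X ((σ j : Fin k) : ℕ) ω := by
    intro ω
    rw [← himg, Finset.prod_image (fun a _ b _ h => σ.injective h)]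
  have h2 : ∀ ω, ∏ j ∈ s, X (j : ℕ) ω = ∏ i ∈ Finset.range t.card, X i ω := by
    intro ω
    rw [hs, Finset.prod_map, ← Fin.prod_univ_eq_prod_range (fun i => X i ω) t.card]
    apply Finset.prod_congr rfl
    intros; simp
  calc ∫ ω, ∏ j ∈ t, X (j : ℕ) ω ∂P
      = ∫ ω, ∏ j ∈ s, X ((σ j : Fin k) : ℕ) ω ∂P := by simp only [h1]
    _ = ∫ ω, ∏ j ∈ s, X (j : ℕ) ω ∂P := moment_perm hXmeas hexch σ s
    _ = ∫ ω, ∏ i ∈ Finset.range t.card, X i ω ∂P := by simp only [h2]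


lemma integrable_pow_mu (μ : Measure ℝ) [IsProbabilityMeasure μ]
    (hsupp : μ (Set.Icc 0 1)ᶜ = 0) (n : ℕ) :
    Integrable (fun p : ℝ => p ^ n) μ := by
  have hae : ∀ᵐ p ∂μ, p ∈ Set.Icc (0:ℝ) 1 := by
    rw [MeasureTheory.ae_iff]
    exact hsupp
  refine ⟨(measurable_id.pow_const n).aestronglyMeasurable, ?_⟩
  apply HasFiniteIntegral.of_bounded (C := 1)
  filter_upwards [hae] with p hp
  rw [Real.norm_eq_abs, abs_pow, abs_of_nonneg hp.1]
  exact pow_le_one₀ hp.1 hp.2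

lemma key_integral (hXmeas : ∀ i, Measurable (X i))
    (hXval : ∀ i ω, X i ω = 0 ∨ X i ω = 1) (hexch : Exchangeable P X)
    (μ : Measure ℝ) [IsProbabilityMeasure μ] (hsupp : μ (Set.Icc 0 1)ᶜ = 0)
    (hμ : ∀ k : ℕ, ∫ p, p ^ k ∂μ = ∫ ω, ∏ i ∈ Finset.range k, X i ω ∂P)
    {k : ℕ} (y : Fin k → ℝ) :
    ∫ ω, ∏ j, (if y j = 1 then X (j : ℕ) ω else 1 - X (j : ℕ) ω) ∂P
      = ∫ p, ∏ j, (if y j = 1 then p else 1 - p) ∂μ := by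
  classical
  set d : Fin k → ℝ := fun j => if y j = 1 then 1 else -1 with hd
  set c : Fin k → ℝ := fun j => if y j = 1 then 0 else 1 with hc
  set C : Finset (Fin k) → ℝ :=
    fun t => (∏ j ∈ t, d j) * ∏ j ∈ Finset.univ \ t, c j with hC
  have hexpand : ∀ x : Fin k → ℝ,
      (∏ j, (if y j = 1 then x j else 1 - x j))
        = ∑ t ∈ (Finset.univ : Finset (Fin k)).powerset, C t * ∏ j ∈ t, x j := by
    intro x
    have : ∀ j : Fin k, (if y j = 1 then x j else 1 - x j) = d j * x j + c j := by
      intro j; by_cases h : y j = 1 <;> simp [hd, hc, h] <;> ring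
    simp only [this]
    rw [Finset.prod_add]
    apply Finset.sum_congr rfl
    intro t _
    rw [Finset.prod_mul_distrib, hC]
    ring
  have hL : ∫ ω, ∏ j, (if y j = 1 then X (j : ℕ) ω else 1 - X (j : ℕ) ω) ∂P
      = ∑ t ∈ (Finset.univ : Finset (Fin k)).powerset,
          C t * ∫ ω, ∏ j ∈ t, X (j : ℕ) ω ∂P := by
    have : ∀ ω, ∏ j, (if y j = 1 then X (j : ℕ) ω else 1 - X (j : ℕ) ω)
        = ∑ t ∈ (Finset.univ : Finset (Fin k)).powerset,
            C t * ∏ j ∈ t, X (j : ℕ) ω := fun ω => hexpand (fun j => X (j : ℕ) ω)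
    simp only [this]
    rw [integral_finset_sum]
    · exact Finset.sum_congr rfl fun t _ => integral_const_mul _ _
    · intro t _
      exact (integrable_prod_X hXmeas hXval t).const_mul _
  have hR : ∫ p, ∏ j, (if y j = 1 then p else 1 - p) ∂μ
      = ∑ t ∈ (Finset.univ : Finset (Fin k)).powerset,
          C t * ∫ p, p ^ t.card ∂μ := by
    have : ∀ p : ℝ, ∏ j, (if y j = 1 then p else 1 - p)
        = ∑ t ∈ (Finset.univ : Finset (Fin k)).powerset, C t * p ^ t.card := by
      intro p
      rw [hexpand (fun _ => p)]
      apply Finset.sum_congr rfl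
      intro t _
      rw [Finset.prod_const]
    simp only [this]
    rw [integral_finset_sum]
    · exact Finset.sum_congr rfl fun t _ => integral_const_mul _ _
    · intro t _
      exact (integrable_pow_mu μ hsupp t.card).const_mul _
  rw [hL, hR]
  apply Finset.sum_congr rfl
  intro t _
  rw [hμ t.card, moment_subset hXmeas hexch t]

lemma prob_eq_mixture (hXmeas : ∀ i, Measurable (X i))
    (hXval : ∀ i ω, X i ω = 0 ∨ X i ω = 1) (hexch : Exchangeable P X)
    (μ : Measure ℝ) [IsProbabilityMeasure μ] (hsupp : μ (Set.Icc 0 1)ᶜ = 0)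
    (hμ : ∀ k : ℕ, ∫ p, p ^ k ∂μ = ∫ ω, ∏ i ∈ Finset.range k, X i ω ∂P)
    {k : ℕ} (y : Fin k → ℝ) (hy : ∀ j, y j = 0 ∨ y j = 1) :
    P {ω | ∀ j : Fin k, X (j : ℕ) ω = y j}
      = ENNReal.ofReal (∫ p, ∏ j, (if y j = 1 then p else 1 - p) ∂μ) := by
  classical
  set E : Set Ω := {ω | ∀ j : Fin k, X (j : ℕ) ω = y j} with hE
  have hEmeas : MeasurableSet E := by
    have : E = ⋂ j : Fin k, (X (j : ℕ)) ⁻¹' {y j} := by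
      ext ω; simp [hE, Set.mem_iInter]
    rw [this]
    exact MeasurableSet.iInter fun j => (hXmeas _) (measurableSet_singleton _)
  have hind : ∀ ω, (∏ j, (if y j = 1 then X (j : ℕ) ω else 1 - X (j : ℕ) ω))
      = E.indicator (fun _ => (1:ℝ)) ω := by
    intro ω
    by_cases hω : ω ∈ E
    · rw [Set.indicator_of_mem hω]
      apply Finset.prod_eq_one
      intro j _
      rcases hy j with h0 | h1
      · simp [hω j, h0, if_neg (by rw [h0]; norm_num : ¬ y j = 1)]
      · simp [hω j, h1]
    · rw [Set.indicator_of_notMem hω]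
      simp only [hE, Set.mem_setOf_eq, not_forall] at hω
      obtain ⟨j, hj⟩ := hω
      apply Finset.prod_eq_zero (Finset.mem_univ j)
      rcases hy j with h0 | h1
      · rcases hXval (j : ℕ) ω with hx | hx
        · exact absurd (hx.trans h0.symm) hj
        · simp [if_neg (by rw [h0]; norm_num : ¬ y j = 1), hx]
      · rcases hXval (j : ℕ) ω with hx | hx
        · simp [h1, hx]
        · exact absurd (hx.trans h1.symm) hj
  have hint : ∫ ω, ∏ j, (if y j = 1 then X (j : ℕ) ω else 1 - X (j : ℕ) ω) ∂P
      = (P E).toReal := by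
    simp only [hind]
    have := MeasureTheory.integral_indicator_one (μ := P) hEmeas
    exact this
  rw [← key_integral hXmeas hXval hexch μ hsupp hμ y, hint,
    ENNReal.ofReal_toReal (measure_ne_top P E)]


open scoped Classical in
lemma map_sum_apply {Z : ℕ → Ω → ℝ} (hZmeas : ∀ i, Measurable (Z i))
    (hZval : ∀ i ω, Z i ω = 0 ∨ Z i ω = 1) (N : ℕ) {A : Set ℝ} (hA : MeasurableSet A) :
    Measure.map (fun ω => ∑ i ∈ Finset.range N, Z i ω) P A
      = ∑ v : Fin N → Bool,
          if (∑ j, (if v j then (1:ℝ) else 0)) ∈ A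
          then P {ω | ∀ j : Fin N, Z (j : ℕ) ω = (if v j then (1:ℝ) else 0)} else 0 := by
  classical
  have hS : Measurable (fun ω => ∑ i ∈ Finset.range N, Z i ω) :=
    Finset.measurable_sum _ fun i _ => hZmeas i
  rw [Measure.map_apply hS hA]
  set S : Ω → ℝ := fun ω => ∑ i ∈ Finset.range N, Z i ω with hSdef
  set E : (Fin N → Bool) → Set Ω :=
    fun v => {ω | ∀ j : Fin N, Z (j : ℕ) ω = (if v j then (1:ℝ) else 0)} with hEdef
  have hEmeas : ∀ v, MeasurableSet (E v) := by
    intro v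
    have : E v = ⋂ j : Fin N, (Z (j : ℕ)) ⁻¹' {(if v j then (1:ℝ) else 0)} := by
      ext ω; simp [hEdef, Set.mem_iInter]
    rw [this]
    exact MeasurableSet.iInter fun j => (hZmeas _) (measurableSet_singleton _)
  have hdisj : Pairwise (Function.onFun Disjoint fun v => S ⁻¹' A ∩ E v) := by
    intro v w hvw
    refine Set.disjoint_left.mpr ?_
    rintro ω ⟨-, hv⟩ ⟨-, hw⟩
    apply hvw
    funext j
    have h := (hv j).symm.trans (hw j)
    by_cases h1 : v j <;> by_cases h2 : w j <;>
      simp only [h1, h2, if_true, if_false] at h ⊢ <;> norm_num at h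
  have hcover : (⋃ v : Fin N → Bool, E v) = Set.univ := by
    ext ω
    simp only [Set.mem_iUnion, Set.mem_univ, iff_true]
    refine ⟨fun j => decide (Z (j : ℕ) ω = 1), fun j => ?_⟩
    rcases hZval (j : ℕ) ω with h | h <;> simp [h]
  have hsum : ∀ v, ∀ ω ∈ E v, S ω = ∑ j, (if v j then (1:ℝ) else 0) := by
    intro v ω hω
    show ∑ i ∈ Finset.range N, Z i ω = _
    rw [← Fin.sum_univ_eq_sum_range (fun i => Z i ω) N]
    exact Finset.sum_congr rfl fun j _ => hω j
  have hsplit : ∀ v, S ⁻¹' A ∩ E v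
      = if (∑ j, (if v j then (1:ℝ) else 0)) ∈ A then E v else ∅ := by
    intro v
    by_cases hcA : (∑ j, (if v j then (1:ℝ) else 0)) ∈ A
    · rw [if_pos hcA]
      ext ω
      refine ⟨fun h => h.2, fun h => ⟨?_, h⟩⟩
      rw [Set.mem_preimage, hsum v ω h]
      exact hcA
    · rw [if_neg hcA]
      ext ω
      simp only [Set.mem_inter_iff, Set.mem_preimage, Set.mem_empty_iff_false, iff_false]
      rintro ⟨h1, h2⟩
      exact hcA (by rw [← hsum v ω h2]; exact h1)
  have hdecomp : S ⁻¹' A = ⋃ v, (S ⁻¹' A ∩ E v) := by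
    rw [← Set.inter_iUnion, hcover, Set.inter_univ]
  rw [hdecomp, measure_iUnion hdisj (fun v => ((hS hA).inter (hEmeas v))), tsum_fintype]
  apply Finset.sum_congr rfl
  intro v _
  rw [hsplit v]
  split_ifs with h
  · rfl
  · exact measure_empty

end Aux

/-- with μ the de Finetti measure of X and Y the μ-mixture of
i.i.d. Bernoulli sequences, S_N = Σ_{i<N} X_i and T_N = Σ_{i<N} Y_i have the
same distribution. -/
theorem sum_dist_eq_of_deFinetti {Ω Ω' : Type*} [MeasurableSpace Ω] [MeasurableSpace Ω']
    (P : Measure Ω) [IsProbabilityMeasure P] (Q : Measure Ω') [IsProbabilityMeasure Q]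
    (X : ℕ → Ω → ℝ) (hXmeas : ∀ i, Measurable (X i))
    (hXval : ∀ i ω, X i ω = 0 ∨ X i ω = 1) (hexch : Exchangeable P X)
    (μ : Measure ℝ) [IsProbabilityMeasure μ] (hsupp : μ (Set.Icc 0 1)ᶜ = 0)
    (hμ : ∀ k : ℕ, ∫ p, p ^ k ∂μ = ∫ ω, ∏ i ∈ Finset.range k, X i ω ∂P)
    (Y : ℕ → Ω' → ℝ) (hYmeas : ∀ i, Measurable (Y i))
    (hYval : ∀ i ω, Y i ω = 0 ∨ Y i ω = 1)
    (hmix : IsBernoulliMixture Q Y μ) (N : ℕ) :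
    Measure.map (fun ω => ∑ i ∈ Finset.range N, X i ω) P
      = Measure.map (fun ω' => ∑ i ∈ Finset.range N, Y i ω') Q := by
  classical
  ext A hA
  rw [map_sum_apply hXmeas hXval N hA, map_sum_apply hYmeas hYval N hA]
  apply Finset.sum_congr rfl
  intro v _
  have hy : ∀ j : Fin N, (if v j then (1:ℝ) else 0) = 0 ∨ (if v j then (1:ℝ) else 0) = 1 := by
    intro j; by_cases h : v j <;> simp [h]
  rw [prob_eq_mixture hXmeas hXval hexch μ hsupp hμ _ hy]
  rw [hmix N _ hy]
end
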